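/- Let p be an odd prime and let D be an integer with D ≡ 1 (mod 4) and p ∤ D. Then the number of pairs (a, b) ∈ (ℤ/pℤ) × (ℤ/pℤ) satisfying a² + a·b + ((1 − D)/4)·b² = 1 equals p − (D/p), where (D/p) is the Legendre symbol. (In particular, the group 𝒢_p(D) has order p − (D/p) when D ≡ 1 (mod 4).) -/

import Mathlib

open Finset

section aux

variable {F : Type*} [Field F] [Fintype F] [DecidableEq F]

private lemma aux_sum_affine {e : F} (he : e ≠ 0) (c : F) :
    ∑ t : F, quadraticChar F (c + e * t) = ∑ s : F, quadraticChar F s := by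
  exact Fintype.sum_equiv ((Equiv.mulLeft₀ e he).trans (Equiv.addLeft c))
    (fun t => quadraticChar F (c + e * t)) (fun s => quadraticChar F s) (fun t => rfl) |>.symm
    |>.symm

private lemma aux_sum_tt (hF : ringChar F ≠ 2) {e : F} (he : e ≠ 0) :
    ∑ t : F, quadraticChar F (t * (t + e)) = -1 := by
  have h0 : (0 : F) ∈ (univ : Finset F) := mem_univ 0
  rw [← Finset.sum_erase_add _ _ h0]
  have hz : quadraticChar F ((0 : F) * (0 + e)) = 0 := by
    rw [zero_mul]; exact quadraticChar_zero
  rw [hz, add_zero]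
  have h1 : ∑ t ∈ univ.erase (0 : F), quadraticChar F (t * (t + e)) =
      ∑ t ∈ univ.erase (0 : F), quadraticChar F (1 + e * t⁻¹) := by
    refine Finset.sum_congr rfl fun t ht => ?_
    have htne : t ≠ 0 := (Finset.mem_erase.mp ht).1
    have : t * (t + e) = t ^ 2 * (1 + e * t⁻¹) := by
      field_simp
    rw [this, map_mul, quadraticChar_sq_one' htne, one_mul]
  rw [h1]
  have h2 : ∑ t ∈ univ.erase (0 : F), quadraticChar F (1 + e * t⁻¹) =
      ∑ t ∈ univ.erase (0 : F), quadraticChar F (1 + e * t) := by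
    refine Finset.sum_nbij' (fun t => t⁻¹) (fun t => t⁻¹) ?_ ?_ ?_ ?_ ?_
    · intro t ht
      simp only [Finset.mem_erase, mem_univ, and_true] at ht ⊢
      exact inv_ne_zero ht
    · intro t ht
      simp only [Finset.mem_erase, mem_univ, and_true] at ht ⊢
      exact inv_ne_zero ht
    · intro t _; exact inv_inv t
    · intro t _; exact inv_inv t
    · intro t _; rfl
  rw [h2]
  have h3 : ∑ t ∈ univ.erase (0 : F), quadraticChar F (1 + e * t) =
      (∑ t : F, quadraticChar F (1 + e * t)) - quadraticChar F (1 + e * 0) := by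
    rw [← Finset.sum_erase_add _ _ (mem_univ (0 : F))]
    ring
  rw [h3, aux_sum_affine he 1, quadraticChar_sum_zero hF]
  simp

private lemma aux_sum_sq_add (hF : ringChar F ≠ 2) {e : F} (he : e ≠ 0) :
    ∑ v : F, (quadraticChar F (v ^ 2 + e) : ℤ) = -1 := by
  have key : ∑ v : F, (quadraticChar F (v ^ 2 + e) : ℤ) =
      ∑ t : F, ((quadraticChar F t : ℤ) + 1) * quadraticChar F (t + e) := by
    rw [← Fintype.sum_fiberwise (fun v : F => v ^ 2)
      (fun v : F => (quadraticChar F (v ^ 2 + e) : ℤ))]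
    refine Finset.sum_congr rfl fun t _ => ?_
    have hinner : ∑ v : {v : F // v ^ 2 = t}, (quadraticChar F ((v : F) ^ 2 + e) : ℤ) =
        ∑ _v : {v : F // v ^ 2 = t}, (quadraticChar F (t + e) : ℤ) := by
      refine Finset.sum_congr rfl fun v _ => ?_
      rw [v.2]
    rw [hinner, Finset.sum_const, nsmul_eq_mul]
    congr 1
    have := quadraticChar_card_sqrts hF t
    rw [← this]
    simp [Set.toFinset_card, Fintype.card_subtype]
  rw [key]
  have expand : ∀ t : F, ((quadraticChar F t : ℤ) + 1) * quadraticChar F (t + e) =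
      (quadraticChar F (t * (t + e)) : ℤ) + quadraticChar F (t + e) := by
    intro t
    rw [map_mul]
    ring
  rw [Finset.sum_congr rfl fun t _ => expand t, Finset.sum_add_distrib]
  have hs1 : ∑ t : F, (quadraticChar F (t * (t + e)) : ℤ) = -1 := by
    exact_mod_cast aux_sum_tt hF he
  have hs2 : ∑ t : F, (quadraticChar F (t + e) : ℤ) = 0 := by
    have : ∑ t : F, quadraticChar F (t + e) = 0 := by
      rw [← quadraticChar_sum_zero hF]
      exact Fintype.sum_equiv (Equiv.addRight e)
        (fun t => quadraticChar F (t + e)) (fun s => quadraticChar F s) (fun t => rfl)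
    exact_mod_cast this
  rw [hs1, hs2, add_zero]

end aux

private lemma aux_card_hyperbola (p : ℕ) [Fact p.Prime] (hp2 : p ≠ 2) {d : ZMod p}
    (hd : d ≠ 0) :
    (Fintype.card {uv : ZMod p × ZMod p // uv.1 ^ 2 - d * uv.2 ^ 2 = 1} : ℤ) =
      p - quadraticChar (ZMod p) d := by
  have hF : ringChar (ZMod p) ≠ 2 := by
    rw [ZMod.ringChar_zmod_n]; exact hp2
  have e1 : {uv : ZMod p × ZMod p // uv.1 ^ 2 - d * uv.2 ^ 2 = 1} ≃
      Σ v : ZMod p, {u : ZMod p // u ^ 2 = 1 + d * v ^ 2} := by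
    refine (Equiv.subtypeEquiv (Equiv.prodComm _ _) ?_).trans
      (Equiv.subtypeProdEquivSigmaSubtype fun v u => u ^ 2 = 1 + d * v ^ 2)
    intro uv
    simp only [Equiv.prodComm_apply, Prod.fst_swap, Prod.snd_swap]
    constructor
    · intro h; linear_combination h
    · intro h; linear_combination h
  have hcard : Fintype.card {uv : ZMod p × ZMod p // uv.1 ^ 2 - d * uv.2 ^ 2 = 1} =
      ∑ v : ZMod p, Fintype.card {u : ZMod p // u ^ 2 = 1 + d * v ^ 2} := by
    rw [Fintype.card_congr e1, Fintype.card_sigma]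
  rw [hcard]
  push_cast
  have hfib : ∀ v : ZMod p, (Fintype.card {u : ZMod p // u ^ 2 = 1 + d * v ^ 2} : ℤ) =
      quadraticChar (ZMod p) (1 + d * v ^ 2) + 1 := by
    intro v
    have := quadraticChar_card_sqrts hF (1 + d * v ^ 2)
    rw [← this]
    simp [Set.toFinset_card, Fintype.card_subtype]
  rw [Finset.sum_congr rfl fun v _ => hfib v, Finset.sum_add_distrib, Finset.sum_const]
  have hsum : ∑ v : ZMod p, (quadraticChar (ZMod p) (1 + d * v ^ 2) : ℤ) =
      -quadraticChar (ZMod p) d := by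
    have hrw : ∀ v : ZMod p, (quadraticChar (ZMod p) (1 + d * v ^ 2) : ℤ) =
        (quadraticChar (ZMod p) d : ℤ) * quadraticChar (ZMod p) (v ^ 2 + d⁻¹) := by
      intro v
      have : (1 : ZMod p) + d * v ^ 2 = d * (v ^ 2 + d⁻¹) := by
        field_simp; ring
      rw [this, map_mul]
    rw [Finset.sum_congr rfl fun v _ => hrw v, ← Finset.mul_sum,
      aux_sum_sq_add hF (inv_ne_zero hd)]
    ring
  rw [hsum, nsmul_eq_mul, mul_one, Finset.card_univ, ZMod.card]
  ring

/-- Theorem 2.1 (case `D ≡ 1 (mod 4)`): the number of solutions of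
`a² + a·b + ((1 − D)/4)·b² = 1` over `ℤ/pℤ` equals `p − (D/p)`. -/
theorem stmt_5 (p : ℕ) [Fact p.Prime] (hpodd : Odd p)
    (D : ℤ) (hD4 : D % 4 = 1) (hpD : ¬ (p : ℤ) ∣ D) :
    (Fintype.card {ab : ZMod p × ZMod p //
        ab.1 ^ 2 + ab.1 * ab.2 + (((1 - D) / 4 : ℤ) : ZMod p) * ab.2 ^ 2 = 1} : ℤ) =
      p - legendreSym p D := by
  have hp2 : p ≠ 2 := by
    rintro rfl
    simp [Nat.odd_iff] at hpodd
  have hF : ringChar (ZMod p) ≠ 2 := by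
    rw [ZMod.ringChar_zmod_n]; exact hp2
  have h2 : (2 : ZMod p) ≠ 0 := Ring.two_ne_zero hF
  set d : ZMod p := (D : ZMod p) with hd_def
  have hd : d ≠ 0 := by
    rw [hd_def, Ne, ZMod.intCast_zmod_eq_zero_iff_dvd]
    exact hpD
  set c : ZMod p := (((1 - D) / 4 : ℤ) : ZMod p) with hc_def
  have hdvd : (4 : ℤ) ∣ 1 - D := by omega
  have h4c : (4 : ZMod p) * c = 1 - d := by
    rw [hc_def, hd_def]
    have : (4 : ℤ) * ((1 - D) / 4) = 1 - D := Int.mul_ediv_cancel' hdvd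
    calc (4 : ZMod p) * (((1 - D) / 4 : ℤ) : ZMod p)
        = (((4 : ℤ) * ((1 - D) / 4) : ℤ) : ZMod p) := by push_cast; ring
      _ = ((1 - D : ℤ) : ZMod p) := by rw [this]
      _ = 1 - (D : ZMod p) := by push_cast; ring
  have key : ∀ a b : ZMod p,
      (a + b * 2⁻¹) ^ 2 - d * (b * 2⁻¹) ^ 2 = a ^ 2 + a * b + c * b ^ 2 := by
    intro a b
    have hi : (2 : ZMod p) * 2⁻¹ = 1 := mul_inv_cancel₀ h2
    linear_combination (a * b + b ^ 2 * c * (2 * 2⁻¹ + 1)) * hi - b ^ 2 * 2⁻¹ ^ 2 * h4c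
  have e : {ab : ZMod p × ZMod p //
      ab.1 ^ 2 + ab.1 * ab.2 + c * ab.2 ^ 2 = 1} ≃
      {uv : ZMod p × ZMod p // uv.1 ^ 2 - d * uv.2 ^ 2 = 1} :=
    { toFun := fun x => ⟨(x.1.1 + x.1.2 * 2⁻¹, x.1.2 * 2⁻¹), by
        have := x.2
        simp only
        rw [key x.1.1 x.1.2]
        exact this⟩
      invFun := fun x => ⟨(x.1.1 - x.1.2, 2 * x.1.2), by
        have hx := x.2
        simp only
        linear_combination hx + x.1.2 ^ 2 * h4c⟩
      left_inv := fun x => by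
        apply Subtype.ext
        have hi : (2 : ZMod p) * 2⁻¹ = 1 := mul_inv_cancel₀ h2
        apply Prod.ext
        · simp only
          ring
        · simp only
          linear_combination x.1.2 * hi
      right_inv := fun x => by
        apply Subtype.ext
        have hi : (2 : ZMod p) * 2⁻¹ = 1 := mul_inv_cancel₀ h2
        apply Prod.ext
        · simp only
          linear_combination x.1.2 * hi
        · simp only
          linear_combination x.1.2 * hi }
  have hleg : legendreSym p D = quadraticChar (ZMod p) d := rfl
  rw [Fintype.card_congr e, aux_card_hyperbola p hp2 hd, hleg]
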